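/- (Causality and equivalence of the semi-Lagrangian update) Let Ξ = {(ξ_1,ξ_2) : ξ_1,ξ_2 ≥ 0, ξ_1+ξ_2 = 1}, τ(ξ) = (h/f)√(ξ_1² + ξ_2²), and C(ξ) = [(K + λq)τ(ξ) + ξ_1 V_1 + ξ_2 V_2] / (1 + λτ(ξ)). Suppose ξ* is a minimizer of C over Ξ with both components strictly positive, and V^{12} = C(ξ*) < q, with K ≥ 0, λ, h, f > 0. Then V^{12} > V_1, V^{12} > V_2, and V^{12} satisfies the quadratic equation f²[(V^{12} - V_1)² + (V^{12} - V_2)²] = h²(K + λq - λV^{12})². -/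

import Mathlib

theorem stmt19 (h f lam K q V₁ V₂ : ℝ)
    (hh : 0 < h) (hf : 0 < f) (hlam : 0 < lam) (hK : 0 ≤ K)
    -- the simplex Ξ, the time function τ, and the semi-Lagrangian cost C
    (Ξ : Set (ℝ × ℝ)) (hΞ : Ξ = {ξ : ℝ × ℝ | 0 ≤ ξ.1 ∧ 0 ≤ ξ.2 ∧ ξ.1 + ξ.2 = 1})
    (τ : ℝ × ℝ → ℝ) (hτ : ∀ ξ, τ ξ = (h / f) * Real.sqrt (ξ.1 ^ 2 + ξ.2 ^ 2))
    (C : ℝ × ℝ → ℝ)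
    (hC : ∀ ξ, C ξ = ((K + lam * q) * τ ξ + (ξ.1 * V₁ + ξ.2 * V₂)) / (1 + lam * τ ξ))
    -- ξ* is an interior minimizer of C over Ξ
    (ξstar : ℝ × ℝ) (hmem : ξstar ∈ Ξ) (h1 : 0 < ξstar.1) (h2 : 0 < ξstar.2)
    (hmin : ∀ ξ ∈ Ξ, C ξstar ≤ C ξ)
    (V12 : ℝ) (hV12 : V12 = C ξstar) (hVq : V12 < q) :
    V₁ < V12 ∧ V₂ < V12 ∧
      f ^ 2 * ((V12 - V₁) ^ 2 + (V12 - V₂) ^ 2) = h ^ 2 * (K + lam * q - lam * V12) ^ 2 := by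
  obtain ⟨hs1, hs2, hsum⟩ : 0 ≤ ξstar.1 ∧ 0 ≤ ξstar.2 ∧ ξstar.1 + ξstar.2 = 1 := by
    rw [hΞ] at hmem; exact hmem
  set s := ξstar.1 with hsdef
  have hξ2 : ξstar.2 = 1 - s := by linarith
  have hslt : s < 1 := by linarith
  set A := K + lam * q with hAdef
  set φ : ℝ → ℝ := fun x =>
    (A * ((h / f) * Real.sqrt (x ^ 2 + (1 - x) ^ 2)) + (x * V₁ + (1 - x) * V₂)) /
      (1 + lam * ((h / f) * Real.sqrt (x ^ 2 + (1 - x) ^ 2))) with hφdef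
  -- basic positivity
  have hgpos : ∀ x : ℝ, 0 < x ^ 2 + (1 - x) ^ 2 := by
    intro x; nlinarith [sq_nonneg (2 * x - 1)]
  have hsqrtpos : ∀ x : ℝ, 0 < Real.sqrt (x ^ 2 + (1 - x) ^ 2) := by
    intro x; exact Real.sqrt_pos.mpr (hgpos x)
  have hhf : 0 < h / f := div_pos hh hf
  have hfne : f ≠ 0 := ne_of_gt hf
  have hDpos : ∀ x : ℝ, 0 < 1 + lam * ((h / f) * Real.sqrt (x ^ 2 + (1 - x) ^ 2)) := by
    intro x; positivity
  -- value of C at ξstar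
  have hCs : C ξstar = φ s := by
    rw [hC ξstar, hτ ξstar]
    simp only [hφdef, hξ2, ← hsdef]
  -- local minimality of φ at s
  have hloc : IsLocalMin φ s := by
    filter_upwards [Ioo_mem_nhds h1 hslt] with x hx
    have hxΞ : ((x, 1 - x) : ℝ × ℝ) ∈ Ξ := by
      rw [hΞ]
      refine ⟨le_of_lt hx.1, ?_, ?_⟩
      · show (0 : ℝ) ≤ 1 - x
        linarith [hx.2]
      · show x + (1 - x) = 1
        ring
    have hCx : C (x, 1 - x) = φ x := by
      simp only [hC, hτ, hφdef]
    calc φ s = C ξstar := hCs.symm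
      _ ≤ C (x, 1 - x) := hmin _ hxΞ
      _ = φ x := hCx
  -- derivative of φ at s
  set r := Real.sqrt (s ^ 2 + (1 - s) ^ 2) with hrdef
  have hrpos : 0 < r := hsqrtpos s
  have hrne : r ≠ 0 := ne_of_gt hrpos
  have hfr : 0 < f * r := mul_pos hf hrpos
  have hr2 : r ^ 2 = s ^ 2 + (1 - s) ^ 2 := Real.sq_sqrt (le_of_lt (hgpos s))
  have hDne : (1 + lam * ((h / f) * r)) ≠ 0 := ne_of_gt (hDpos s)
  have hgd : HasDerivAt (fun x : ℝ => x ^ 2 + (1 - x) ^ 2) (2 * s - 2 * (1 - s)) s := by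
    have ha := hasDerivAt_pow 2 s
    have hb : HasDerivAt (fun x : ℝ => (1 - x) ^ 2) ((2 : ℕ) * (1 - s) ^ (2 - 1) * (-1)) s :=
      ((hasDerivAt_id s).const_sub 1).pow 2
    exact (ha.add hb).congr_deriv (by push_cast; ring)
  have hsqd0 : HasDerivAt (fun x : ℝ => Real.sqrt (x ^ 2 + (1 - x) ^ 2))
      ((2 * s - 2 * (1 - s)) / (2 * r)) s := hgd.sqrt (ne_of_gt (hgpos s))
  have hw1 : (2 * s - 2 * (1 - s)) / (2 * r) = (2 * s - 1) / r := by
    rw [div_eq_div_iff (by positivity) hrne]; ring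
  have hsqd : HasDerivAt (fun x : ℝ => Real.sqrt (x ^ 2 + (1 - x) ^ 2)) ((2 * s - 1) / r) s :=
    hw1 ▸ hsqd0
  have hw2 : (h / f) * ((2 * s - 1) / r) = h * (2 * s - 1) / (f * r) :=
    div_mul_div_comm h f (2 * s - 1) r
  have hsc : HasDerivAt (fun x : ℝ => (h / f) * Real.sqrt (x ^ 2 + (1 - x) ^ 2))
      (h * (2 * s - 1) / (f * r)) s := hw2 ▸ (hsqd.const_mul (h / f))
  have hlin : HasDerivAt (fun x : ℝ => x * V₁ + (1 - x) * V₂) (V₁ - V₂) s := by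
    have ha := (hasDerivAt_id s).mul_const V₁
    have hb := ((hasDerivAt_id s).const_sub 1).mul_const V₂
    exact (ha.add hb).congr_deriv (by ring)
  have hN : HasDerivAt
      (fun x : ℝ => A * ((h / f) * Real.sqrt (x ^ 2 + (1 - x) ^ 2)) + (x * V₁ + (1 - x) * V₂))
      (A * (h * (2 * s - 1) / (f * r)) + (V₁ - V₂)) s :=
    (hsc.const_mul A).add hlin
  have hD : HasDerivAt
      (fun x : ℝ => 1 + lam * ((h / f) * Real.sqrt (x ^ 2 + (1 - x) ^ 2)))
      (lam * (h * (2 * s - 1) / (f * r))) s :=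
    (hsc.const_mul lam).const_add 1
  have hφd : HasDerivAt φ
      (((A * (h * (2 * s - 1) / (f * r)) + (V₁ - V₂)) * (1 + lam * ((h / f) * r)) -
          (A * ((h / f) * r) + (s * V₁ + (1 - s) * V₂)) * (lam * (h * (2 * s - 1) / (f * r)))) /
        (1 + lam * ((h / f) * r)) ^ 2) s := hN.div hD (ne_of_gt (hDpos s))
  have hder0 := hloc.hasDerivAt_eq_zero hφd
  rw [div_eq_zero_iff] at hder0
  have h0 := hder0.resolve_right (pow_ne_zero 2 hDne)
  -- value equation
  have h4 : V12 = (A * ((h / f) * r) + (s * V₁ + (1 - s) * V₂)) / (1 + lam * ((h / f) * r)) := by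
    rw [hV12, hCs]
  rw [eq_div_iff hDne] at h4
  clear_value s A φ r
  -- positivity of A - lam * V12
  have hapos : 0 < A - lam * V12 := by
    have : A - lam * V12 = K + lam * (q - V12) := by rw [hAdef]; ring
    rw [this]
    have : 0 < lam * (q - V12) := mul_pos hlam (by linarith)
    linarith
  -- rearranged value equation
  have h6 : (A - lam * V12) * (h * r) / f = V12 - (s * V₁ + (1 - s) * V₂) := by
    linear_combination -h4
  rw [div_eq_iff hfne] at h6
  -- first-order condition
  have h0' : (1 + lam * ((h / f) * r)) *
      ((A - lam * V12) * (h * (2 * s - 1) / (f * r)) + (V₁ - V₂)) = 0 := by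
    linear_combination h0 - (lam * (h * (2 * s - 1) / (f * r))) * h4
  have h1' := (mul_eq_zero.mp h0').resolve_left hDne
  have h5 : (A - lam * V12) * (h * (2 * s - 1)) / (f * r) = V₂ - V₁ := by
    linear_combination h1'
  rw [div_eq_iff (ne_of_gt hfr)] at h5
  -- key identities
  have c1 : f * r * (V12 - V₁) = h * s * (A - lam * V12) := by
    linear_combination (-r) * h6 - (1 - s) * h5 + h * (A - lam * V12) * hr2
  have c2 : f * r * (V12 - V₂) = h * (1 - s) * (A - lam * V12) := by
    linear_combination (-r) * h6 + s * h5 + h * (A - lam * V12) * hr2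
  have hv1 : V₁ < V12 := by
    have hpos : 0 < f * r * (V12 - V₁) := by
      rw [c1]; exact mul_pos (mul_pos hh h1) hapos
    have h' := mul_pos (inv_pos.mpr hfr) hpos
    rw [inv_mul_cancel_left₀ (ne_of_gt hfr)] at h'
    linarith
  have hv2 : V₂ < V12 := by
    have hpos : 0 < f * r * (V12 - V₂) := by
      rw [c2]; exact mul_pos (mul_pos hh (by linarith : (0:ℝ) < 1 - s)) hapos
    have h' := mul_pos (inv_pos.mpr hfr) hpos
    rw [inv_mul_cancel_left₀ (ne_of_gt hfr)] at h'
    linarith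
  refine ⟨hv1, hv2, ?_⟩
  have hKey : r ^ 2 * (f ^ 2 * ((V12 - V₁) ^ 2 + (V12 - V₂) ^ 2)) =
      r ^ 2 * (h ^ 2 * (A - lam * V12) ^ 2) := by
    linear_combination (f * r * (V12 - V₁) + h * s * (A - lam * V12)) * c1 +
      (f * r * (V12 - V₂) + h * (1 - s) * (A - lam * V12)) * c2 -
      h ^ 2 * (A - lam * V12) ^ 2 * hr2
  have hfin : f ^ 2 * ((V12 - V₁) ^ 2 + (V12 - V₂) ^ 2) = h ^ 2 * (A - lam * V12) ^ 2 :=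
    mul_left_cancel₀ (by positivity) hKey
  exact hfin
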